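/- For every n ∈ ω, the set of conditions (d, π, F) of the predictor forcing ℙ such that d^{-1}(1) has at least n elements is dense in ℙ: every condition of ℙ can be extended to one in which the set of coordinates where d takes value 1 has size at least n. (Hence the generic predictor has infinite domain.) -/

import Mathlib

/-- A condition of the predictor forcing `ℙ`: a triple `(d, π, F)` where `d ∈ 2^{<ω}`
(a finite binary sequence, coded as a `List Bool`), `π = ⟨π_n : n ∈ d⁻¹(1)⟩` with each
`π_n : ω^n → ω` (note that `d.getD n false = true` holds exactly when `n < |d|` and
`d(n) = 1`), and `F` is a finite set of functions in `ω^ω` any two distinct members of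
which differ at some coordinate below `|d|`. -/
structure PCond where
  d : List Bool
  pi : (n : ℕ) → d.getD n false = true → (Fin n → ℕ) → ℕ
  F : Set (ℕ → ℕ)
  finF : F.Finite
  sep : ∀ f ∈ F, ∀ g ∈ F, f ≠ g → ∃ n < d.length, f n ≠ g n

/-- The extension relation of `ℙ`: `(d', π', F') ≤ (d, π, F)` iff `d' ⊇ d`, `π' ⊇ π`,
`F' ⊇ F` and for every `f ∈ F` and every `n ∈ (d')⁻¹(1) \ d⁻¹(1)`,
`π'_n(f ↾ n) = f n`. -/
def PLE (p q : PCond) : Prop :=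
  q.d <+: p.d ∧
    (∀ n : ℕ, ∀ hq : q.d.getD n false = true, ∀ hp : p.d.getD n false = true,
      p.pi n hp = q.pi n hq) ∧
    q.F ⊆ p.F ∧
    ∀ f ∈ q.F, ∀ n : ℕ, q.d.getD n false = false →
      ∀ hp : p.d.getD n false = true, p.pi n hp (fun j : Fin n => f j) = f n

/-- For every `n`, the set of conditions `(d, π, F)` of `ℙ` such that `d⁻¹(1)` has at
least `n` elements is dense in `ℙ`. -/
theorem stmt16 (n : ℕ) (p : PCond) :
    ∃ q : PCond, PLE q p ∧ n ≤ {m : ℕ | q.d.getD m false = true}.ncard := by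
  classical
  set L := p.d.length with hL
  set D : List Bool := p.d ++ List.replicate n true with hD
  have hDlen : D.length = L + n := by simp [hD, hL]
  have hlow : ∀ m, m < L → D.getD m false = p.d.getD m false := fun m h =>
    List.getD_append _ _ _ _ h
  have hhigh : ∀ m, L ≤ m → m < L + n → D.getD m false = true := by
    intro m h1 h2
    rw [hD, List.getD_append_right _ _ _ _ h1]
    have : m - L < n := by omega
    simp [List.getD, List.getElem?_replicate, show m - p.d.length < n by omega]
  have hout : ∀ m, L + n ≤ m → D.getD m false = false := by
    intro m h
    apply List.getD_eq_default
    omega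
  have hpout : ∀ m, L ≤ m → p.d.getD m false = false := by
    intro m h
    apply List.getD_eq_default
    omega
  refine ⟨⟨D, fun m _ =>
      if hm : p.d.getD m false = true then p.pi m hm
      else fun s => if hf : ∃ f ∈ p.F, ∀ j : Fin m, f j = s j then hf.choose m else 0,
      p.F, p.finF, ?_⟩, ⟨?_, ?_, ?_, ?_⟩, ?_⟩
  · intro f hf g hg hfg
    obtain ⟨k, hk, hne⟩ := p.sep f hf g hg hfg
    exact ⟨k, by omega, hne⟩
  · exact ⟨List.replicate n true, rfl⟩
  · intro m hq hp
    simp only [dif_pos hq]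
  · exact subset_rfl
  · intro f hf m hm0 hp
    have hnot : ¬ p.d.getD m false = true := by
      intro h; rw [hm0] at h; exact Bool.noConfusion h
    dsimp only
    rw [dif_neg hnot]
    have hfex : ∃ f' ∈ p.F, ∀ j : Fin m, f' j = (fun j : Fin m => f j) j :=
      ⟨f, hf, fun j => rfl⟩
    show (if hf : ∃ f' ∈ p.F, ∀ j : Fin m, f' j = (fun j : Fin m => f j) j then hf.choose m else 0) = f m
    rw [dif_pos hfex]
    have hc := hfex.choose_spec
    obtain ⟨hcF, hagree⟩ := hc
    have hmL : L ≤ m := by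
      by_contra hlt
      push_neg at hlt
      rw [hlow m hlt] at hp
      rw [hm0] at hp
      exact Bool.noConfusion hp
    by_cases heq : hfex.choose = f
    · rw [heq]
    · obtain ⟨k, hk, hne⟩ := p.sep _ hcF f hf heq
      exact absurd (hagree ⟨k, by omega⟩) hne
  · have hsub : (↑(Finset.Ico L (L + n)) : Set ℕ) ⊆ {m : ℕ | D.getD m false = true} := by
      intro m hm
      simp only [Finset.coe_Ico, Set.mem_Ico] at hm
      exact hhigh m hm.1 hm.2
    have hfin : {m : ℕ | D.getD m false = true}.Finite := by
      apply (Set.finite_Iio (L + n)).subset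
      intro m hm
      simp only [Set.mem_setOf_eq] at hm
      simp only [Set.mem_Iio]
      by_contra h
      push_neg at h
      rw [hout m h] at hm
      exact Bool.noConfusion hm
    calc n = (↑(Finset.Ico L (L + n)) : Set ℕ).ncard := by
            rw [Set.ncard_coe_finset]; simp
      _ ≤ _ := Set.ncard_le_ncard hsub hfin
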